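/- For all integers k ≥ 2 and d ≥ 1, one has (1 − 1/k)^k − (1 − 1/k)^{k+d} ≥ (1/8)·min{1, d/k}. -/

import Mathlib

open Real

lemma aux_exp43 : Real.exp (4/3) ≤ 4 := by
  have h2 : (0.6931471803 : ℝ) < Real.log 2 := Real.log_two_gt_d9
  have h4 : Real.log 4 = 2 * Real.log 2 := by
    rw [show (4:ℝ) = 2^2 by norm_num, Real.log_pow]; push_cast; ring
  have : (4/3 : ℝ) ≤ Real.log 4 := by rw [h4]; nlinarith
  calc Real.exp (4/3) ≤ Real.exp (Real.log 4) := Real.exp_le_exp.2 this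
    _ = 4 := Real.exp_log (by norm_num)

-- (1 - 1/k)^k ≥ 1/4 for k ≥ 2
lemma aux_quarter (k : ℕ) (hk : 2 ≤ k) : (1/4 : ℝ) ≤ (1 - 1/(k:ℝ))^k := by
  rcases Nat.lt_or_ge k 5 with h5 | h5
  · interval_cases k <;> norm_num
  · have hk5 : (5:ℝ) ≤ k := by exact_mod_cast h5
    have hkpos : (0:ℝ) < k := by linarith
    set x : ℝ := 1/(k:ℝ) with hx
    have hx0 : 0 < x := by positivity
    have hx5 : x ≤ 1/5 := by
      rw [hx, div_le_div_iff₀ hkpos (by norm_num)]; linarith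
    set t : ℝ := x + x^2 with ht
    -- exp t ≥ (1+t/2)^2 ≥ 1/(1-x), hence exp(-t) ≤ 1 - x
    have hexp : 1/(1-x) ≤ Real.exp t := by
      have h1 : (1 + t/2)^2 ≤ Real.exp t := by
        have := Real.add_one_le_exp (t/2)
        calc (1 + t/2)^2 ≤ (Real.exp (t/2))^2 := by
              apply pow_le_pow_left₀ (by nlinarith) (by linarith)
          _ = Real.exp t := by rw [← Real.exp_nat_mul]; congr 1; push_cast; ring
      have hx1 : x < 1 := by linarith
      rw [div_le_iff₀ (by linarith)]
      have hp2 : 0 ≤ (1/5 - x) * x^2 := mul_nonneg (by linarith) (sq_nonneg x)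
      have hp3 : 0 ≤ (1/5 - x) * x^3 := mul_nonneg (by linarith) (by positivity)
      have hp4 : 0 ≤ (1/5 - x) * x^4 := mul_nonneg (by linarith) (by positivity)
      calc (1:ℝ) ≤ (1 + t/2)^2 * (1 - x) := by rw [ht]; nlinarith [sq_nonneg x, hp2, hp3, hp4]
        _ ≤ Real.exp t * (1 - x) := by nlinarith
    have hmono : Real.exp (-t) ≤ 1 - x := by
      have hx1 : x < 1 := by linarith
      rw [Real.exp_neg]
      rw [inv_le_iff_one_le_mul₀ (Real.exp_pos t)]
      rw [div_le_iff₀ (by linarith)] at hexp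
      linarith [hexp]
    have hpow : Real.exp (-t) ^ k ≤ (1 - x)^k :=
      pow_le_pow_left₀ (Real.exp_nonneg _) hmono k
    have hkt : (k:ℝ) * t = 1 + x := by
      rw [ht, hx]; field_simp
    have heq : Real.exp (-t) ^ k = Real.exp (-(1+x)) := by
      rw [← Real.exp_nat_mul, ← hkt]; ring_nf
    have hfinal : (1/4:ℝ) ≤ Real.exp (-(1+x)) := by
      have h1 : Real.exp (-(1+x)) ≥ Real.exp (-(4/3)) := by
        apply Real.exp_le_exp.2; nlinarith
      have h2 : Real.exp (-(4/3)) ≥ 1/4 := by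
        rw [Real.exp_neg, ge_iff_le, le_inv_comm₀ (by norm_num) (Real.exp_pos _)]
        calc Real.exp (4/3) ≤ 4 := aux_exp43
          _ = (1/4:ℝ)⁻¹ := by norm_num
      linarith
    calc (1/4:ℝ) ≤ Real.exp (-(1+x)) := hfinal
      _ = Real.exp (-t) ^ k := heq.symm
      _ ≤ (1-x)^k := hpow

theorem stmt17 (k d : ℕ) (hk : 2 ≤ k) (hd : 1 ≤ d) :
    (1/8 : ℝ) * min 1 ((d:ℝ) / k)
      ≤ (1 - 1/(k:ℝ))^k - (1 - 1/(k:ℝ))^(k + d) := by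
  have hkpos : (0:ℝ) < k := by positivity
  set y : ℝ := 1 - 1/(k:ℝ) with hy
  have hk2 : (2:ℝ) ≤ k := by exact_mod_cast hk
  have hy0 : 0 ≤ y := by
    rw [hy, sub_nonneg, div_le_iff₀ hkpos]; linarith
  have hy1 : y ≤ 1 := by
    rw [hy]; have : 0 < 1/(k:ℝ) := by positivity
    linarith
  have hA : (1/4:ℝ) ≤ y^k := aux_quarter k hk
  have hAhalf : y^k ≤ 1/2 := by
    have h1 : y ≤ Real.exp (-(1/(k:ℝ))) := by
      have := Real.add_one_le_exp (-(1/(k:ℝ)))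
      rw [hy]; linarith
    have h2 : y^k ≤ Real.exp (-(1/(k:ℝ)))^k := pow_le_pow_left₀ hy0 h1 k
    have h3 : Real.exp (-(1/(k:ℝ)))^k = Real.exp (-1) := by
      rw [← Real.exp_nat_mul]
      congr 1; field_simp
    have h4 : Real.exp (-1) ≤ 1/2 := by
      rw [Real.exp_neg, inv_le_comm₀ (Real.exp_pos _) (by norm_num)]
      have := Real.add_one_le_exp (1:ℝ); linarith
    rw [h3] at h2; linarith
  rw [pow_add]
  rcases le_total d k with hdk | hkd
  · -- d ≤ k : min = d/k
    have hr1 : (d:ℝ)/k ≤ 1 := by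
      rw [div_le_one hkpos]; exact_mod_cast hdk
    rw [min_eq_right hr1]
    -- Bernoulli: y^d * (1 + d/k) ≤ 1
    have hbern : y^d * (1 + (d:ℝ)/k) ≤ 1 := by
      have h1 : 1 + (d:ℝ) * (1/(k:ℝ)) ≤ (1 + 1/(k:ℝ))^d :=
        one_add_mul_le_pow (le_trans (by norm_num) (by positivity : (0:ℝ) ≤ 1/(k:ℝ))) d
      have h2 : y^d * (1 + 1/(k:ℝ))^d = (y * (1 + 1/(k:ℝ)))^d := (mul_pow _ _ _).symm
      have h3 : y * (1 + 1/(k:ℝ)) ≤ 1 := by rw [hy]; nlinarith [sq_nonneg (1/(k:ℝ))]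
      have h4 : (y * (1 + 1/(k:ℝ)))^d ≤ 1 := pow_le_one₀ (by positivity) h3
      have h5 : y^d * (1 + (d:ℝ)/k) ≤ y^d * (1 + 1/(k:ℝ))^d := by
        apply mul_le_mul_of_nonneg_left _ (pow_nonneg hy0 d)
        rw [div_eq_mul_one_div]; exact h1
      calc y^d * (1 + (d:ℝ)/k) ≤ (y * (1 + 1/(k:ℝ)))^d := by rw [← h2]; exact h5
        _ ≤ 1 := h4
    have hr0 : 0 ≤ (d:ℝ)/k := by positivity
    have hB0 : 0 ≤ y^d := pow_nonneg hy0 d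
    have hhalf : (d:ℝ)/k/2 ≤ 1 - y^d := by
      nlinarith [mul_nonneg hr0 (sub_nonneg.2 hr1), mul_nonneg hB0 hr0]
    have : (1/8:ℝ) * ((d:ℝ)/k) = (1/4) * ((d:ℝ)/k/2) := by ring
    rw [this]
    calc (1/4:ℝ) * ((d:ℝ)/k/2) ≤ y^k * (1 - y^d) := by
          apply mul_le_mul hA hhalf (by linarith) (by positivity)
      _ = y^k - y^k * y^d := by ring
  · -- k ≤ d : min = 1
    have hr1 : (1:ℝ) ≤ (d:ℝ)/k := by
      rw [le_div_iff₀ hkpos]; rw [one_mul]; exact_mod_cast hkd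
    rw [min_eq_left hr1]
    have hdd : y^d ≤ y^k := pow_le_pow_of_le_one hy0 hy1 hkd
    have hk0 : 0 ≤ y^k := pow_nonneg hy0 k
    nlinarith [mul_le_mul_of_nonneg_left hdd hk0]
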